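/- arXiv:2305.08508 — 2 statements merged into one kernel-verified Lean document; each statement's English description precedes it below -/
import Mathlib

section
/- Let Σ be a discrete-time LPV-SSA with state dimension n_x and let V = Ker 𝒪_{n_x-1} be the kernel of its extended observability matrix. If v ∈ V, then for every scheduling signal p : ℕ → ℙ, the free output response from initial state v is identically zero: 𝔜_{Σ,v}(0,p)(t) = 0 for all t ∈ ℕ. Consequently, for any two initial states x₁, x₂ with x₁ - x₂ ∈ V, 𝔜_{Σ,x₁} = 𝔜_{Σ,x₂}. -/
open Matrix

/-- Affine matrix-valued function of the scheduling value: `M(q) = M₀ + Σᵢ qᵢ Mᵢ`. -/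
noncomputable def affMat {np : ℕ} {m n : Type*}
    (M : Fin (np + 1) → Matrix m n ℝ) (q : Fin np → ℝ) : Matrix m n ℝ :=
  M 0 + ∑ i : Fin np, q i • M i.succ

/-- State trajectory of a discrete-time LPV-SSA: `x(t+1) = A(p(t)) x(t) + B(p(t)) u(t)`. -/
noncomputable def st {np : ℕ} {X U : Type*} [Fintype X] [Fintype U]
    (A : Fin (np + 1) → Matrix X X ℝ) (B : Fin (np + 1) → Matrix X U ℝ)
    (x0 : X → ℝ) (u : ℕ → U → ℝ) (p : ℕ → Fin np → ℝ) : ℕ → X → ℝ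
  | 0 => x0
  | t + 1 => affMat A (p t) *ᵥ st A B x0 u p t + affMat B (p t) *ᵥ u t

/-- Output trajectory (input-output map from initial state `x0`):
`y(t) = C(p(t)) x(t) + D(p(t)) u(t)`. -/
noncomputable def out {np : ℕ} {X U Y : Type*} [Fintype X] [Fintype U]
    (A : Fin (np + 1) → Matrix X X ℝ) (B : Fin (np + 1) → Matrix X U ℝ)
    (C : Fin (np + 1) → Matrix Y X ℝ) (D : Fin (np + 1) → Matrix Y U ℝ)
    (x0 : X → ℝ) (u : ℕ → U → ℝ) (p : ℕ → Fin np → ℝ) (t : ℕ) : Y → ℝ :=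
  affMat C (p t) *ᵥ st A B x0 u p t + affMat D (p t) *ᵥ u t

/-- Kernel of the `k`-step extended observability matrix `𝒪_k`. -/
noncomputable def kerO {np nx ny : ℕ}
    (A : Fin (np + 1) → Matrix (Fin nx) (Fin nx) ℝ)
    (C : Fin (np + 1) → Matrix (Fin ny) (Fin nx) ℝ) : ℕ → Submodule ℝ (Fin nx → ℝ)
  | 0 => ⨅ i : Fin (np + 1), LinearMap.ker (Matrix.mulVecLin (C i))
  | k + 1 => kerO A C k ⊓
      ⨅ i : Fin (np + 1), Submodule.comap (Matrix.mulVecLin (A i)) (kerO A C k)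

/-- Column space (range) of the `k`-step extended reachability matrix `ℛ_k`. -/
noncomputable def reachR {np nx nu : ℕ}
    (A : Fin (np + 1) → Matrix (Fin nx) (Fin nx) ℝ)
    (B : Fin (np + 1) → Matrix (Fin nx) (Fin nu) ℝ) : ℕ → Submodule ℝ (Fin nx → ℝ)
  | 0 => ⨆ i : Fin (np + 1), LinearMap.range (Matrix.mulVecLin (B i))
  | k + 1 => reachR A B k ⊔
      ⨆ i : Fin (np + 1), Submodule.map (Matrix.mulVecLin (A i)) (reachR A B k)



lemma sum_mulVec' {ι m n : Type*} [Fintype n] (s : Finset ι)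
    (M : ι → Matrix m n ℝ) (v : n → ℝ) :
    (∑ i ∈ s, M i) *ᵥ v = ∑ i ∈ s, (M i *ᵥ v) := by
  induction s using Finset.cons_induction with
  | empty => simp [Matrix.zero_mulVec]
  | cons a s ha ih => simp [Finset.sum_cons, Matrix.add_mulVec, ih]

lemma affMat_mulVec {np : ℕ} {m n : Type*} [Fintype n]
    (M : Fin (np + 1) → Matrix m n ℝ) (q : Fin np → ℝ) (v : n → ℝ) :
    affMat M q *ᵥ v = M 0 *ᵥ v + ∑ i : Fin np, q i • (M i.succ *ᵥ v) := by
  simp [affMat, Matrix.add_mulVec, sum_mulVec', Matrix.smul_mulVec]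

lemma kerO_succ_le {np nx ny : ℕ}
    (A : Fin (np + 1) → Matrix (Fin nx) (Fin nx) ℝ)
    (C : Fin (np + 1) → Matrix (Fin ny) (Fin nx) ℝ) (k : ℕ) :
    kerO A C (k + 1) ≤ kerO A C k := by
  rw [show kerO A C (k+1) = kerO A C k ⊓
      ⨅ i : Fin (np + 1), Submodule.comap (Matrix.mulVecLin (A i)) (kerO A C k) from rfl]
  exact inf_le_left

lemma kerO_antitone {np nx ny : ℕ}
    (A : Fin (np + 1) → Matrix (Fin nx) (Fin nx) ℝ)
    (C : Fin (np + 1) → Matrix (Fin ny) (Fin nx) ℝ) :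
    Antitone (kerO A C) :=
  antitone_nat_of_succ_le (kerO_succ_le A C)

lemma kerO_stab_prop {np nx ny : ℕ}
    (A : Fin (np + 1) → Matrix (Fin nx) (Fin nx) ℝ)
    (C : Fin (np + 1) → Matrix (Fin ny) (Fin nx) ℝ) {k : ℕ}
    (h : kerO A C (k + 1) = kerO A C k) :
    ∀ j, k ≤ j → kerO A C j = kerO A C k := by
  intro j hj
  induction j with
  | zero =>
    have : k = 0 := by omega
    rw [this]
  | succ j ih =>
    rcases Nat.lt_or_ge k (j+1) with h1 | h1
    · have hkj : k ≤ j := by omega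
      have := ih hkj
      show kerO A C j ⊓ _ = kerO A C k
      rw [this]
      exact h
    · have : k = j + 1 := by omega
      rw [this]

lemma kerO_stable {np nx ny : ℕ} (hnx : 1 ≤ nx)
    (A : Fin (np + 1) → Matrix (Fin nx) (Fin nx) ℝ)
    (C : Fin (np + 1) → Matrix (Fin ny) (Fin nx) ℝ) :
    kerO A C nx = kerO A C (nx - 1) := by
  by_cases h0 : kerO A C 0 = ⊤
  · have h1 : kerO A C 1 = kerO A C 0 := by
      show kerO A C 0 ⊓ _ = kerO A C 0
      rw [h0]
      simp
    rw [kerO_stab_prop A C h1 nx (by omega), kerO_stab_prop A C h1 (nx-1) (by omega)]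
  · by_cases h : ∃ k < nx - 1, kerO A C (k + 1) = kerO A C k
    · obtain ⟨k, hk, hkeq⟩ := h
      rw [kerO_stab_prop A C hkeq nx (by omega), kerO_stab_prop A C hkeq (nx-1) (by omega)]
    · push_neg at h
      -- strict decrease up to nx-1
      have hrank : ∀ k, k ≤ nx - 1 → Module.finrank ℝ (kerO A C k) + k ≤ nx - 1 := by
        intro k
        induction k with
        | zero =>
          intro _
          simp only [Nat.add_zero]
          have hle := Submodule.finrank_le (kerO A C 0)
          rw [Module.finrank_fin_fun] at hle
          rcases Nat.lt_or_ge (Module.finrank ℝ (kerO A C 0)) nx with h1 | h1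
          · omega
          · exfalso
            apply h0
            have : Module.finrank ℝ (kerO A C 0) = nx := by omega
            apply Submodule.eq_top_of_finrank_eq
            rw [this, Module.finrank_fin_fun]
          
        | succ k ih =>
          intro hk1
          have hk : k ≤ nx - 1 := by omega
          have hlt : kerO A C (k + 1) < kerO A C k :=
            lt_of_le_of_ne (kerO_succ_le A C k) (h k (by omega))
          have := Submodule.finrank_lt_finrank_of_lt hlt
          have := ih hk
          omega
      have hbot : kerO A C (nx - 1) = ⊥ := by
        have := hrank (nx - 1) le_rfl
        have h0rank : Module.finrank ℝ (kerO A C (nx - 1)) = 0 := by omega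
        exact Submodule.finrank_eq_zero.mp h0rank
      rw [hbot]
      have : kerO A C nx ≤ kerO A C (nx - 1) := kerO_antitone A C (by omega)
      rw [hbot] at this
      exact le_bot_iff.mp this

lemma mem_V_A {np nx ny : ℕ} (hnx : 1 ≤ nx)
    (A : Fin (np + 1) → Matrix (Fin nx) (Fin nx) ℝ)
    (C : Fin (np + 1) → Matrix (Fin ny) (Fin nx) ℝ)
    {v : Fin nx → ℝ} (hv : v ∈ kerO A C (nx - 1)) (i : Fin (np + 1)) :
    A i *ᵥ v ∈ kerO A C (nx - 1) := by
  have hv' : v ∈ kerO A C ((nx - 1) + 1) := by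
    rw [show nx - 1 + 1 = nx by omega, kerO_stable hnx A C]; exact hv
  have : v ∈ ⨅ i : Fin (np + 1),
      Submodule.comap (Matrix.mulVecLin (A i)) (kerO A C (nx - 1)) := hv'.2
  have := (Submodule.mem_iInf _).mp this i
  simpa [Matrix.mulVecLin_apply] using this

lemma mem_V_C {np nx ny : ℕ}
    (A : Fin (np + 1) → Matrix (Fin nx) (Fin nx) ℝ)
    (C : Fin (np + 1) → Matrix (Fin ny) (Fin nx) ℝ)
    {v : Fin nx → ℝ} (hv : v ∈ kerO A C (nx - 1)) (i : Fin (np + 1)) :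
    C i *ᵥ v = 0 := by
  have h0 : v ∈ kerO A C 0 := kerO_antitone A C (Nat.zero_le _) hv
  have := (Submodule.mem_iInf _).mp h0 i
  simpa [LinearMap.mem_ker, Matrix.mulVecLin_apply] using this

lemma mem_V_affA {np nx ny : ℕ} (hnx : 1 ≤ nx)
    (A : Fin (np + 1) → Matrix (Fin nx) (Fin nx) ℝ)
    (C : Fin (np + 1) → Matrix (Fin ny) (Fin nx) ℝ)
    {v : Fin nx → ℝ} (hv : v ∈ kerO A C (nx - 1)) (q : Fin np → ℝ) :
    affMat A q *ᵥ v ∈ kerO A C (nx - 1) := by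
  rw [affMat_mulVec]
  exact Submodule.add_mem _ (mem_V_A hnx A C hv 0)
    (Submodule.sum_mem _ fun i _ => Submodule.smul_mem _ _ (mem_V_A hnx A C hv i.succ))

lemma affC_zero {np nx ny : ℕ}
    (A : Fin (np + 1) → Matrix (Fin nx) (Fin nx) ℝ)
    (C : Fin (np + 1) → Matrix (Fin ny) (Fin nx) ℝ)
    {v : Fin nx → ℝ} (hv : v ∈ kerO A C (nx - 1)) (q : Fin np → ℝ) :
    affMat C q *ᵥ v = 0 := by
  rw [affMat_mulVec]
  simp [mem_V_C A C hv]

lemma st_mem_V {np nx nu ny : ℕ} (hnx : 1 ≤ nx)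
    (A : Fin (np + 1) → Matrix (Fin nx) (Fin nx) ℝ)
    (B : Fin (np + 1) → Matrix (Fin nx) (Fin nu) ℝ)
    (C : Fin (np + 1) → Matrix (Fin ny) (Fin nx) ℝ)
    {v : Fin nx → ℝ} (hv : v ∈ kerO A C (nx - 1)) (p : ℕ → Fin np → ℝ) (t : ℕ) :
    st A B v (fun _ _ => 0) p t ∈ kerO A C (nx - 1) := by
  induction t with
  | zero => exact hv
  | succ t ih =>
    show affMat A (p t) *ᵥ st A B v (fun _ _ => 0) p t
        + affMat B (p t) *ᵥ (fun _ => 0) ∈ _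
    have : affMat B (p t) *ᵥ (fun _ => (0:ℝ)) = 0 := Matrix.mulVec_zero _
    rw [this, add_zero]
    exact mem_V_affA hnx A C ih (p t)

lemma st_sub {np nx nu : ℕ}
    (A : Fin (np + 1) → Matrix (Fin nx) (Fin nx) ℝ)
    (B : Fin (np + 1) → Matrix (Fin nx) (Fin nu) ℝ)
    (x1 x2 : Fin nx → ℝ) (u : ℕ → Fin nu → ℝ) (p : ℕ → Fin np → ℝ) (t : ℕ) :
    st A B x1 u p t - st A B x2 u p t = st A B (x1 - x2) (fun _ _ => 0) p t := by
  induction t with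
  | zero => rfl
  | succ t ih =>
    show (affMat A (p t) *ᵥ st A B x1 u p t + affMat B (p t) *ᵥ u t)
        - (affMat A (p t) *ᵥ st A B x2 u p t + affMat B (p t) *ᵥ u t)
        = affMat A (p t) *ᵥ st A B (x1 - x2) (fun _ _ => 0) p t
          + affMat B (p t) *ᵥ (fun _ => 0)
    have hz : affMat B (p t) *ᵥ (fun _ => (0:ℝ)) = 0 := Matrix.mulVec_zero _
    rw [hz, add_zero, ← ih, Matrix.mulVec_sub]
    abel

/-- initial states in `V = Ker 𝒪_{n_x-1}` have identically zero free output
response for every scheduling signal; hence initial states differing by an element of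
`V` induce the same input-output function. -/
theorem stmt7 {np nx nu ny : ℕ} (hnx : 1 ≤ nx) (P : Set (Fin np → ℝ))
    (A : Fin (np + 1) → Matrix (Fin nx) (Fin nx) ℝ)
    (B : Fin (np + 1) → Matrix (Fin nx) (Fin nu) ℝ)
    (C : Fin (np + 1) → Matrix (Fin ny) (Fin nx) ℝ)
    (D : Fin (np + 1) → Matrix (Fin ny) (Fin nu) ℝ) :
    (∀ v ∈ kerO A C (nx - 1), ∀ p : ℕ → Fin np → ℝ, (∀ t, p t ∈ P) →
        ∀ t : ℕ, out A B C D v (fun _ _ => 0) p t = 0) ∧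
    (∀ x1 x2 : Fin nx → ℝ, x1 - x2 ∈ kerO A C (nx - 1) →
        ∀ (u : ℕ → Fin nu → ℝ) (p : ℕ → Fin np → ℝ), (∀ t, p t ∈ P) →
        ∀ t : ℕ, out A B C D x1 u p t = out A B C D x2 u p t) := by
  constructor
  · intro v hv p _ t
    show affMat C (p t) *ᵥ st A B v (fun _ _ => 0) p t + affMat D (p t) *ᵥ (fun _ => 0) = 0
    rw [affC_zero A C (st_mem_V hnx A B C hv p t) (p t),
      show affMat D (p t) *ᵥ (fun _ => (0:ℝ)) = 0 from Matrix.mulVec_zero _, add_zero]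
  · intro x1 x2 h12 u p _ t
    have key : affMat C (p t) *ᵥ (st A B x1 u p t - st A B x2 u p t) = 0 := by
      rw [st_sub]
      exact affC_zero A C (st_mem_V hnx A B C h12 p t) (p t)
    rw [Matrix.mulVec_sub, sub_eq_zero] at key
    show affMat C (p t) *ᵥ st A B x1 u p t + affMat D (p t) *ᵥ u t
        = affMat C (p t) *ᵥ st A B x2 u p t + affMat D (p t) *ᵥ u t
    rw [key]
end

section
/- Concatenation closure of manifest behaviors of span-reachable systems: Let Σ be a discrete-time LPV-SSA and suppose there exist a scheduling signal p_c, time t_c, and for every target state x* an input u_c steering the zero state to x* at time t_c under p_c (complete controllability of the time-varying system Σ(p_c) on [0,t_c]). Then the manifest behavior ℬ(Σ) is controllable: for any (y₁,u₁,p₁), (y₂,u₂,p₂) ∈ ℬ(Σ) and any t ∈ ℕ there exist τ > 0 and (y,u,p) ∈ ℬ(Σ) agreeing with (y₁,u₁,p₁) on [0,t] and satisfying (y(s),u(s),p(s)) = (y₂(s-t-τ), u₂(s-t-τ), p₂(s-t-τ)) for all s ≥ t+τ. -/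
open Matrix

lemma st_congr {np : ℕ} {X U : Type*} [Fintype X] [Fintype U]
    (A : Fin (np + 1) → Matrix X X ℝ) (B : Fin (np + 1) → Matrix X U ℝ)
    (x0 : X → ℝ) (u u' : ℕ → U → ℝ) (p p' : ℕ → Fin np → ℝ) (j : ℕ)
    (h : ∀ s < j, u s = u' s ∧ p s = p' s) :
    st A B x0 u p j = st A B x0 u' p' j := by
  induction j with
  | zero => rfl
  | succ j ih =>
    have h1 := h j (Nat.lt_succ_self j)
    simp only [st, ih (fun s hs => h s (hs.trans (Nat.lt_succ_self j))), h1.1, h1.2]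

lemma st_shift {np : ℕ} {X U : Type*} [Fintype X] [Fintype U]
    (A : Fin (np + 1) → Matrix X X ℝ) (B : Fin (np + 1) → Matrix X U ℝ)
    (x0 : X → ℝ) (u : ℕ → U → ℝ) (p : ℕ → Fin np → ℝ) (k j : ℕ) :
    st A B x0 u p (k + j) =
      st A B (st A B x0 u p k) (fun s => u (k + s)) (fun s => p (k + s)) j := by
  induction j with
  | zero => rfl
  | succ j ih => simp only [st, ← Nat.add_assoc, Nat.add_eq, ih]

lemma st_add {np : ℕ} {X U : Type*} [Fintype X] [Fintype U]
    (A : Fin (np + 1) → Matrix X X ℝ) (B : Fin (np + 1) → Matrix X U ℝ)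
    (x0 x0' : X → ℝ) (u u' : ℕ → U → ℝ) (p : ℕ → Fin np → ℝ) (j : ℕ) :
    st A B (x0 + x0') (fun s => u s + u' s) p j
      = st A B x0 u p j + st A B x0' u' p j := by
  induction j with
  | zero => rfl
  | succ j ih =>
    simp only [st, ih, Matrix.mulVec_add]
    abel

/-- if for some admissible scheduling signal `p_c` and time `t_c` every
state is reachable from the zero state at time `t_c` (complete controllability of the
frozen time-varying system `Σ(p_c)` on `[0,t_c]`), then the manifest behavior of `Σ` is
controllable: any behavior trajectory can be continued, after some delay `τ > 0`, by any
other behavior trajectory. -/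
theorem stmt14 {np nx nu ny : ℕ} (P : Set (Fin np → ℝ))
    (A : Fin (np + 1) → Matrix (Fin nx) (Fin nx) ℝ)
    (B : Fin (np + 1) → Matrix (Fin nx) (Fin nu) ℝ)
    (C : Fin (np + 1) → Matrix (Fin ny) (Fin nx) ℝ)
    (D : Fin (np + 1) → Matrix (Fin ny) (Fin nu) ℝ)
    (pc : ℕ → Fin np → ℝ) (hpc : ∀ t, pc t ∈ P) (tc : ℕ)
    (hctrb : ∀ xstar : Fin nx → ℝ, ∃ uc : ℕ → Fin nu → ℝ,
      st A B (0 : Fin nx → ℝ) uc pc tc = xstar) :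
    ∀ (y1 y2 : ℕ → Fin ny → ℝ) (u1 u2 : ℕ → Fin nu → ℝ) (p1 p2 : ℕ → Fin np → ℝ),
      (∀ t, p1 t ∈ P) → (∀ t, p2 t ∈ P) →
      (∃ x01 : Fin nx → ℝ, y1 = fun t => out A B C D x01 u1 p1 t) →
      (∃ x02 : Fin nx → ℝ, y2 = fun t => out A B C D x02 u2 p2 t) →
      ∀ t : ℕ, ∃ τ : ℕ, 0 < τ ∧
        ∃ (y : ℕ → Fin ny → ℝ) (u : ℕ → Fin nu → ℝ) (p : ℕ → Fin np → ℝ),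
          (∀ s, p s ∈ P) ∧
          (∃ x0 : Fin nx → ℝ, y = fun s => out A B C D x0 u p s) ∧
          (∀ s ≤ t, y s = y1 s ∧ u s = u1 s ∧ p s = p1 s) ∧
          (∀ s : ℕ, t + τ ≤ s →
            y s = y2 (s - t - τ) ∧ u s = u2 (s - t - τ) ∧ p s = p2 (s - t - τ)) := by
  intro y1 y2 u1 u2 p1 p2 hp1 hp2 hb1 hb2 t
  obtain ⟨x01, hy1⟩ := hb1
  obtain ⟨x02, hy2⟩ := hb2
  set τ := tc + 1 with hτ
  set x1 := st A B x01 u1 p1 (t + 1) with hx1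
  set Φ := st A B x1 (fun _ => 0) pc tc with hΦ
  obtain ⟨uc, huc⟩ := hctrb (x02 - Φ)
  set u : ℕ → Fin nu → ℝ := fun s =>
    if s ≤ t then u1 s else if s < t + τ then uc (s - (t + 1)) else u2 (s - t - τ) with hu
  set p : ℕ → Fin np → ℝ := fun s =>
    if s ≤ t then p1 s else if s < t + τ then pc (s - (t + 1)) else p2 (s - t - τ) with hp
  refine ⟨τ, Nat.succ_pos _, (fun s => out A B C D x01 u p s), u, p, ?_, ⟨x01, rfl⟩, ?_, ?_⟩
  · intro s
    by_cases h1 : s ≤ t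
    · simp [hp, h1, hp1 s]
    · by_cases h2 : s < t + τ
      · simp [hp, h1, h2, hpc]
      · simp [hp, h1, h2, hp2]
  · -- agreement on [0, t]
    intro s hs
    have hup : ∀ s' ≤ t, u s' = u1 s' ∧ p s' = p1 s' := by
      intro s' hs'; constructor <;> simp [hu, hp, hs']
    have hst : st A B x01 u p s = st A B x01 u1 p1 s :=
      st_congr A B x01 u u1 p p1 s (fun s' hs' => hup s' (le_of_lt (lt_of_lt_of_le hs' hs)))
    refine ⟨?_, (hup s hs).1, (hup s hs).2⟩
    rw [hy1]
    simp only [out, hst, (hup s hs).1, (hup s hs).2]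
  · -- agreement after t + τ
    -- state at time t+1 equals x1
    have hst1 : st A B x01 u p (t + 1) = x1 := by
      rw [hx1]
      exact st_congr A B x01 u u1 p p1 (t + 1)
        (fun s' hs' => by
          have : s' ≤ t := Nat.lt_succ_iff.mp hs'
          constructor <;> simp [hu, hp, this])
    -- state at time t+1+tc = t+τ equals x02
    have hmid : st A B x01 u p (t + τ) = x02 := by
      have h1 : t + τ = (t + 1) + tc := by omega
      rw [h1, st_shift, hst1]
      have h2 : st A B x1 (fun s => u (t + 1 + s)) (fun s => p (t + 1 + s)) tc
          = st A B x1 uc pc tc := by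
        refine st_congr A B x1 _ uc _ pc tc (fun s' hs' => ?_)
        have hle : ¬ (t + 1 + s' ≤ t) := by omega
        have hlt : t + 1 + s' < t + τ := by omega
        have hsub : t + 1 + s' - (t + 1) = s' := by omega
        constructor <;> simp [hu, hp, hle, hlt, hsub]
      rw [h2]
      have h3 := st_add A B x1 0 (fun _ => (0 : Fin nu → ℝ)) uc pc tc
      simp only [add_zero, zero_add] at h3
      rw [h3, huc, ← hΦ]
      abel
    intro s hs
    obtain ⟨j, rfl⟩ : ∃ j, s = (t + τ) + j := ⟨s - (t + τ), by omega⟩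
    have hsub : ∀ s' : ℕ, (t + τ) + s' - t - τ = s' := by intro s'; omega
    have hupj : ∀ s', u ((t + τ) + s') = u2 s' ∧ p ((t + τ) + s') = p2 s' := by
      intro s'
      have hle : ¬ ((t + τ) + s' ≤ t) := by omega
      have hlt : ¬ ((t + τ) + s' < t + τ) := by omega
      constructor <;> simp [hu, hp, hle, hlt, hsub s']
    have hstj : st A B x01 u p ((t + τ) + j) = st A B x02 u2 p2 j := by
      rw [st_shift, hmid]
      exact st_congr A B x02 _ u2 _ p2 j (fun s' _ => hupj s')
    refine ⟨?_, by rw [hsub j]; exact (hupj j).1, by rw [hsub j]; exact (hupj j).2⟩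
    rw [hy2, hsub j]
    simp only [out, hstj, (hupj j).1, (hupj j).2]
end
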